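/- Let φ be an N-function of class C¹([0,∞)) ∩ C²((0,∞)) with φ'(t) ∼ t·φ''(t) uniformly in t > 0, and let A(z) = φ'(|z|)·z/|z| for z ≠ 0, A(0) = 0. Then there exist constants c, C > 0 such that for all z₁, z₂ ∈ ℝ^{Nn} with |z₁| + |z₂| > 0: |A(z₁) − A(z₂)| ≤ c·φ''(|z₁| + |z₂|)·|z₁ − z₂| and (A(z₁) − A(z₂), z₁ − z₂) ≥ C·φ''(|z₁| + |z₂|)·|z₁ − z₂|². -/

import Mathlib

open MeasureTheory Real Filter
open scoped RealInnerProductSpace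

def IsNFunction (φ φ' : ℝ → ℝ) : Prop :=
  ConvexOn ℝ (Set.Ici 0) φ ∧
  φ 0 = 0 ∧ φ' 0 = 0 ∧
  (∀ t : ℝ, 0 ≤ t → φ t = ∫ s in (0:ℝ)..t, φ' s) ∧
  (∀ t : ℝ, 0 ≤ t → ContinuousWithinAt φ' (Set.Ici t) t) ∧
  MonotoneOn φ' (Set.Ici 0) ∧
  (∀ t : ℝ, 0 < t → 0 < φ' t) ∧
  Tendsto φ' atTop atTop


/-- The Assumption: `φ` is an N-function of class `C¹([0,∞)) ∩ C²((0,∞))`,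
with derivative `φ'` and second derivative `φ''`. -/
def SatisfiesAssumption (φ φ' φ'' : ℝ → ℝ) : Prop :=
  IsNFunction φ φ' ∧
  (∀ t : ℝ, 0 ≤ t → HasDerivWithinAt φ (φ' t) (Set.Ici 0) t) ∧
  ContinuousOn φ' (Set.Ici 0) ∧
  (∀ t : ℝ, 0 < t → HasDerivAt φ' (φ'' t) t) ∧
  ContinuousOn φ'' (Set.Ioi 0)

lemma doubling {φ' φ'' : ℝ → ℝ} {d : ℝ} (hd : 0 < d)
    (hpos : ∀ t : ℝ, 0 < t → 0 < φ' t)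
    (hderiv : ∀ t : ℝ, 0 < t → HasDerivAt φ' (φ'' t) t)
    (hle : ∀ t : ℝ, 0 < t → d * (t * φ'' t) ≤ φ' t)
    {x y : ℝ} (hx : 0 < x) (hxy : x ≤ y) (hy4 : y ≤ 4 * x) :
    φ' y ≤ 4 ^ (1/d : ℝ) * φ' x := by
  have hy : 0 < y := lt_of_lt_of_le hx hxy
  set c : ℝ := -(1/d) with hc
  have hanti : AntitoneOn (fun t => φ' t * t ^ c) (Set.Ioi 0) := by
    apply antitoneOn_of_hasDerivWithinAt_nonpos (convex_Ioi 0)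
      (f' := fun t => φ'' t * t ^ c + φ' t * (c * t ^ (c - 1)))
    · intro t ht
      exact ContinuousAt.continuousWithinAt <|
        ((hderiv t ht).continuousAt.mul
          ((Real.continuousAt_rpow_const t c (Or.inl (ne_of_gt ht)))))
    · intro t ht
      rw [interior_Ioi] at ht ⊢
      exact (((hderiv t ht).mul (Real.hasDerivAt_rpow_const (Or.inl (ne_of_gt ht))))).hasDerivWithinAt
    · intro t ht
      rw [interior_Ioi] at ht
      have ht' : (0:ℝ) < t := ht
      have h1 : t ^ (c - 1) = t ^ c / t := by
        rw [Real.rpow_sub ht', Real.rpow_one]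
      have hrp : 0 < t ^ c := Real.rpow_pos_of_pos ht' c
      have := hle t ht'
      have hkey : φ'' t * t ^ c + φ' t * (c * t ^ (c - 1))
          = (t ^ c / (d * t)) * (d * (t * φ'' t) - φ' t) := by
        rw [h1, hc]; field_simp; ring
      rw [hkey]
      apply mul_nonpos_of_nonneg_of_nonpos
      · positivity
      · linarith
  have h2 : φ' y * y ^ c ≤ φ' x * x ^ c := hanti hx (Set.mem_Ioi.2 hy) hxy
  have hyc : 0 < y ^ (1/d : ℝ) := Real.rpow_pos_of_pos hy _
  have hxc : 0 < x ^ (1/d : ℝ) := Real.rpow_pos_of_pos hx _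
  have hycc : y ^ c = (y ^ (1/d : ℝ))⁻¹ := by rw [hc, Real.rpow_neg hy.le]
  have hxcc : x ^ c = (x ^ (1/d : ℝ))⁻¹ := by rw [hc, Real.rpow_neg hx.le]
  have h3 : φ' y ≤ φ' x * (y ^ (1/d:ℝ) / x ^ (1/d:ℝ)) := by
    rw [hycc, hxcc] at h2
    rw [div_eq_mul_inv]
    calc φ' y = (φ' y * (y ^ (1/d:ℝ))⁻¹) * y ^ (1/d:ℝ) := by field_simp
    _ ≤ (φ' x * (x ^ (1/d:ℝ))⁻¹) * y ^ (1/d:ℝ) := by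
        exact mul_le_mul_of_nonneg_right h2 hyc.le
    _ = φ' x * (y ^ (1/d:ℝ) * (x ^ (1/d:ℝ))⁻¹) := by ring
  have h4 : y ^ (1/d:ℝ) / x ^ (1/d:ℝ) ≤ 4 ^ (1/d:ℝ) := by
    rw [← Real.div_rpow hy.le hx.le]
    apply Real.rpow_le_rpow (by positivity) _ (by positivity)
    rw [div_le_iff₀ hx]; linarith
  have hφx : 0 ≤ φ' x := (hpos x hx).le
  calc φ' y ≤ φ' x * (y ^ (1/d:ℝ) / x ^ (1/d:ℝ)) := h3
  _ ≤ φ' x * 4 ^ (1/d:ℝ) := mul_le_mul_of_nonneg_left h4 hφx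
  _ = 4 ^ (1/d:ℝ) * φ' x := mul_comm _ _

section Scalar
variable {φ' φ'' : ℝ → ℝ} {d d' : ℝ}

section Scalar
variable {φ' φ'' : ℝ → ℝ} {d d' : ℝ}

lemma phi''pos (hd' : 0 < d') (hpos : ∀ t : ℝ, 0 < t → 0 < φ' t)
    (hub : ∀ t : ℝ, 0 < t → φ' t ≤ d' * (t * φ'' t)) {t : ℝ} (ht : 0 < t) : 0 < φ'' t := by
  by_contra h
  push_neg at h
  nlinarith [hpos t ht, hub t ht, mul_nonneg (mul_pos hd' ht).le (neg_nonneg.2 h)]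

lemma phi'nonneg (hzero : φ' 0 = 0) (hpos : ∀ t : ℝ, 0 < t → 0 < φ' t)
    {t : ℝ} (ht : 0 ≤ t) : 0 ≤ φ' t := by
  rcases eq_or_lt_of_le ht with h | h
  · rw [← h, hzero]
  · exact (hpos t h).le

-- L2 : upper bound for sum
lemma L2 (hd' : 0 < d') (hpos : ∀ t : ℝ, 0 < t → 0 < φ' t) (hmono : MonotoneOn φ' (Set.Ici 0))
    (hub : ∀ t : ℝ, 0 < t → φ' t ≤ d' * (t * φ'' t))
    {a b : ℝ} (hb : 0 ≤ b) (hba : b ≤ a) (ha : 0 < a) :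
    φ' a + φ' b ≤ 2 * d' * (φ'' (a + b) * (a + b)) := by
  have hab : 0 < a + b := by linarith
  have h1 : φ' a ≤ φ' (a + b) := hmono (Set.mem_Ici.2 ha.le) (Set.mem_Ici.2 hab.le) (by linarith)
  have h2 : φ' b ≤ φ' (a + b) := hmono (Set.mem_Ici.2 hb) (Set.mem_Ici.2 hab.le) (by linarith)
  have h3 := hub (a + b) hab
  nlinarith

-- L4 : lower bound for sum
lemma L4 (hd : 0 < d) (hd' : 0 < d') (hzero : φ' 0 = 0) (hpos : ∀ t : ℝ, 0 < t → 0 < φ' t)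
    (hderiv : ∀ t : ℝ, 0 < t → HasDerivAt φ' (φ'' t) t)
    (hlb : ∀ t : ℝ, 0 < t → d * (t * φ'' t) ≤ φ' t)
    {a b : ℝ} (hb : 0 ≤ b) (hba : b ≤ a) (ha : 0 < a) :
    (d / 4 ^ (1/d : ℝ)) * (φ'' (a + b) * (a + b)) ≤ φ' a + φ' b := by
  have hab : 0 < a + b := by linarith
  have hK : 0 < (4:ℝ) ^ (1/d : ℝ) := Real.rpow_pos_of_pos (by norm_num) _
  have h1 : φ' (a + b) ≤ 4 ^ (1/d : ℝ) * φ' a :=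
    doubling hd hpos hderiv hlb ha (by linarith) (by linarith)
  have h2 := hlb (a + b) hab
  have hb0 : 0 ≤ φ' b := phi'nonneg hzero hpos hb
  rw [div_mul_eq_mul_div, div_le_iff₀ hK]
  nlinarith [mul_nonneg hK.le hb0]

-- L1 : upper bound for difference
lemma L1 (hd : 0 < d) (hd' : 0 < d') (hzero : φ' 0 = 0)
    (hpos : ∀ t : ℝ, 0 < t → 0 < φ' t)
    (hmono : MonotoneOn φ' (Set.Ici 0)) (hcont : ContinuousOn φ' (Set.Ici 0))
    (hderiv : ∀ t : ℝ, 0 < t → HasDerivAt φ' (φ'' t) t)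
    (hlb : ∀ t : ℝ, 0 < t → d * (t * φ'' t) ≤ φ' t)
    (hub : ∀ t : ℝ, 0 < t → φ' t ≤ d' * (t * φ'' t))
    {a b : ℝ} (hb : 0 ≤ b) (hba : b ≤ a) (ha : 0 < a) :
    φ' a - φ' b ≤ (4 * d' + 4 * d' / d) * (φ'' (a + b) * (a - b)) := by
  have hab : 0 < a + b := by linarith
  have hφ'' : 0 < φ'' (a + b) := phi''pos hd' hpos hub hab
  have hub' := hub (a + b) hab
  have hma : φ' a ≤ φ' (a + b) := hmono (Set.mem_Ici.2 ha.le) (Set.mem_Ici.2 hab.le) (by linarith)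
  have hb0 : 0 ≤ φ' b := phi'nonneg hzero hpos hb
  rcases le_or_gt b (a / 2) with hcase | hcase
  · -- b ≤ a/2
    have key : φ' a ≤ 4 * d' * (φ'' (a + b) * (a - b)) := by
      have h1 : (a + b) * φ'' (a + b) ≤ (4 * (a - b)) * φ'' (a + b) :=
        mul_le_mul_of_nonneg_right (by linarith) hφ''.le
      nlinarith [mul_le_mul_of_nonneg_left h1 hd'.le]
    have extra : 0 ≤ (4 * d' / d) * (φ'' (a + b) * (a - b)) := by
      apply mul_nonneg (by positivity)
      exact mul_nonneg hφ''.le (by linarith)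
    nlinarith
  · -- a/2 < b ≤ a
    rcases eq_or_lt_of_le hba with h | hba'
    · subst h; nlinarith
    · obtain ⟨ξ, hξ, hξeq⟩ := exists_hasDerivAt_eq_slope φ' φ'' hba'
        (hcont.mono (by intro t ht; exact Set.mem_Ici.2 (by simp at ht; linarith [ht.1])))
        (fun x hx => hderiv x (by linarith [hx.1]))
      have hξa : ξ < a := hξ.2
      have hξb : b < ξ := hξ.1
      have hξpos : 0 < ξ := by linarith
      have heq : φ' a - φ' b = φ'' ξ * (a - b) := by
        rw [hξeq, div_mul_cancel₀ _ (ne_of_gt (by linarith : (0:ℝ) < a - b))]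
      have hξlb := hlb ξ hξpos
      have hmξ : φ' ξ ≤ φ' (a + b) :=
        hmono (Set.mem_Ici.2 hξpos.le) (Set.mem_Ici.2 hab.le) (by linarith)
      rw [heq]
      have hkey : φ'' ξ ≤ (4 * d' / d) * φ'' (a + b) := by
        rw [div_mul_eq_mul_div, le_div_iff₀ hd]
        nlinarith [mul_le_mul_of_nonneg_right (show a + b ≤ 4 * ξ by linarith)
          (mul_pos hd' hφ'').le, hξlb, hmξ, hub', hξpos, mul_pos hξpos hd']
      nlinarith [mul_le_mul_of_nonneg_right hkey (show (0:ℝ) ≤ a - b by linarith),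
        mul_nonneg (mul_nonneg (by linarith : (0:ℝ) ≤ 4 * d') hφ''.le)
          (show (0:ℝ) ≤ a - b by linarith)]

-- L3 : lower bound for difference
lemma L3 (hd : 0 < d) (hd' : 0 < d') (hzero : φ' 0 = 0)
    (hpos : ∀ t : ℝ, 0 < t → 0 < φ' t)
    (hmono : MonotoneOn φ' (Set.Ici 0)) (hcont : ContinuousOn φ' (Set.Ici 0))
    (hderiv : ∀ t : ℝ, 0 < t → HasDerivAt φ' (φ'' t) t)
    (hlb : ∀ t : ℝ, 0 < t → d * (t * φ'' t) ≤ φ' t)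
    (hub : ∀ t : ℝ, 0 < t → φ' t ≤ d' * (t * φ'' t))
    {a b : ℝ} (hb : 0 ≤ b) (hba : b ≤ a) (ha : 0 < a) :
    (d / (2 * d' * 4 ^ (1/d : ℝ))) * (φ'' (a + b) * (a - b)) ≤ φ' a - φ' b := by
  have hab : 0 < a + b := by linarith
  have hK : 0 < (4:ℝ) ^ (1/d : ℝ) := Real.rpow_pos_of_pos (by norm_num) _
  have hφ'' : 0 < φ'' (a + b) := phi''pos hd' hpos hub hab
  have hdd : 0 < d / (d' * 4 ^ (1/d:ℝ)) := by positivity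
  have h2const : d / (2 * d' * 4 ^ (1/d:ℝ)) = (d / (d' * 4 ^ (1/d:ℝ))) / 2 := by
    ring
  have hkey : ∀ s : ℝ, a / 2 ≤ s → s ≤ a → (d / (d' * 4 ^ (1/d:ℝ))) * φ'' (a + b) ≤ φ'' s := by
    intro s hs1 hs2
    have hs : 0 < s := by linarith
    have hφs : 0 < φ'' s := phi''pos hd' hpos hub hs
    have h1 := hub s hs
    have h2 : φ' (a / 2) ≤ φ' s :=
      hmono (Set.mem_Ici.2 (by linarith)) (Set.mem_Ici.2 hs.le) hs1
    have h3 : φ' (a + b) ≤ 4 ^ (1/d : ℝ) * φ' (a / 2) :=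
      doubling hd hpos hderiv hlb (by linarith) (by linarith) (by linarith)
    have h4 := hlb (a + b) hab
    have c1 : d * (a * φ'' (a + b)) ≤ d * ((a + b) * φ'' (a + b)) :=
      mul_le_mul_of_nonneg_left (mul_le_mul_of_nonneg_right (by linarith) hφ''.le) hd.le
    have c4 : 4 ^ (1/d:ℝ) * φ' (a / 2) ≤ 4 ^ (1/d:ℝ) * φ' s := mul_le_mul_of_nonneg_left h2 hK.le
    have c5 : 4 ^ (1/d:ℝ) * φ' s ≤ 4 ^ (1/d:ℝ) * (d' * (s * φ'' s)) :=
      mul_le_mul_of_nonneg_left h1 hK.le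
    have c6 : 4 ^ (1/d:ℝ) * (d' * (s * φ'' s)) ≤ 4 ^ (1/d:ℝ) * (d' * (a * φ'' s)) :=
      mul_le_mul_of_nonneg_left
        (mul_le_mul_of_nonneg_left (mul_le_mul_of_nonneg_right hs2 hφs.le) hd'.le) hK.le
    have main : d * (a * φ'' (a + b)) ≤ 4 ^ (1/d:ℝ) * (d' * (a * φ'' s)) := by linarith
    rw [div_mul_eq_mul_div, div_le_iff₀ (by positivity)]
    nlinarith [main, ha]
  rcases le_or_gt b (a / 2) with hcase | hcase
  · -- b ≤ a/2 : use φ' a - φ' (a/2)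
    have hb2 : φ' b ≤ φ' (a / 2) :=
      hmono (Set.mem_Ici.2 hb) (Set.mem_Ici.2 (by linarith)) hcase
    obtain ⟨ξ, hξ, hξeq⟩ := exists_hasDerivAt_eq_slope φ' φ'' (show a/2 < a by linarith)
      (hcont.mono (by intro t ht; exact Set.mem_Ici.2 (by simp at ht; linarith [ht.1])))
      (fun x hx => hderiv x (by linarith [hx.1]))
    have hhalf : a - a / 2 = a / 2 := by ring
    have heq : φ' a - φ' (a/2) = φ'' ξ * (a/2) := by
      rw [hξeq, hhalf, div_mul_cancel₀ _ (ne_of_gt (by linarith : (0:ℝ) < a / 2))]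
    have hkξ := hkey ξ hξ.1.le hξ.2.le
    have hstep : (d / (d' * 4 ^ (1/d:ℝ))) * φ'' (a + b) * (a/2) ≤ φ'' ξ * (a/2) :=
      mul_le_mul_of_nonneg_right hkξ (by linarith)
    rw [h2const]
    nlinarith [mul_le_mul_of_nonneg_left (show a - b ≤ a by linarith)
      (mul_nonneg hdd.le hφ''.le)]
  · -- a/2 < b
    rcases eq_or_lt_of_le hba with h | hba'
    · subst h; simp
    · obtain ⟨ξ, hξ, hξeq⟩ := exists_hasDerivAt_eq_slope φ' φ'' hba'
        (hcont.mono (by intro t ht; exact Set.mem_Ici.2 (by simp at ht; linarith [ht.1])))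
        (fun x hx => hderiv x (by linarith [hx.1]))
      have heq : φ' a - φ' b = φ'' ξ * (a - b) := by
        rw [hξeq, div_mul_cancel₀ _ (ne_of_gt (by linarith : (0:ℝ) < a - b))]
      have hkξ := hkey ξ (by linarith [hξ.1]) hξ.2.le
      rw [heq, h2const]
      nlinarith [mul_le_mul_of_nonneg_right hkξ (show (0:ℝ) ≤ a - b by linarith),
        mul_nonneg (mul_nonneg hdd.le hφ''.le) (show (0:ℝ) ≤ a - b by linarith)]
end Scalar

open scoped RealInnerProductSpace

section Core

/-- The affine-in-`t` endpoint argument, purely scalar. -/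
lemma core {c₀ C₀ F a b t P Q fa fb : ℝ}
    (ha : 0 < a) (hb : 0 < b) (hba : b ≤ a) (hF : 0 ≤ F)
    (hPa : P * a = fa) (hQb : Q * b = fb)
    (ht1 : t ≤ a * b) (ht2 : -(a * b) ≤ t)
    (hc₀ : 0 ≤ c₀) (hdiff : 0 ≤ fa - fb) (hsum : 0 ≤ fa + fb)
    (hU1 : fa - fb ≤ c₀ * (F * (a - b))) (hU2 : fa + fb ≤ c₀ * (F * (a + b)))
    (hV1 : C₀ * (F * (a - b)) ≤ fa - fb) (hV2 : C₀ * (F * (a + b)) ≤ fa + fb) :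
    P ^ 2 * a ^ 2 + Q ^ 2 * b ^ 2 - 2 * (P * Q) * t ≤ (c₀ * F) ^ 2 * (a ^ 2 + b ^ 2 - 2 * t) ∧
    C₀ * (F * (a ^ 2 + b ^ 2 - 2 * t)) ≤ P * a ^ 2 + Q * b ^ 2 - (P + Q) * t := by
  rw [← hPa, ← hQb] at hU1 hU2 hV1 hV2 hdiff hsum
  have habn : (0:ℝ) ≤ a - b := by linarith
  have h2ab : 0 < 2 * (a * b) := by positivity
  constructor
  · have hsum' : 0 ≤ c₀ * (F * (a - b)) + (P * a - Q * b) := by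
      nlinarith [mul_nonneg (mul_nonneg hc₀ hF) habn]
    have hsum'' : 0 ≤ c₀ * (F * (a + b)) + (P * a + Q * b) := by
      nlinarith [mul_nonneg (mul_nonneg hc₀ hF) (by linarith : (0:ℝ) ≤ a + b), hsum]
    have g1 : 0 ≤ (c₀ * (F * (a - b))) ^ 2 - (P * a - Q * b) ^ 2 := by
      nlinarith [mul_nonneg (sub_nonneg.2 hU1) hsum']
    have g2 : 0 ≤ (c₀ * (F * (a + b))) ^ 2 - (P * a + Q * b) ^ 2 := by
      nlinarith [mul_nonneg (sub_nonneg.2 hU2) hsum'']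
    have hsumn : 0 ≤ 2 * (a * b) *
        ((c₀ * F) ^ 2 * (a ^ 2 + b ^ 2 - 2 * t)
          - (P ^ 2 * a ^ 2 + Q ^ 2 * b ^ 2 - 2 * (P * Q) * t)) := by
      have iden : 2 * (a * b) *
          ((c₀ * F) ^ 2 * (a ^ 2 + b ^ 2 - 2 * t)
            - (P ^ 2 * a ^ 2 + Q ^ 2 * b ^ 2 - 2 * (P * Q) * t))
          = (a * b + t) * ((c₀ * (F * (a - b))) ^ 2 - (P * a - Q * b) ^ 2)
            + (a * b - t) * ((c₀ * (F * (a + b))) ^ 2 - (P * a + Q * b) ^ 2) := by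
        ring
      rw [iden]
      exact add_nonneg (mul_nonneg (by linarith) g1) (mul_nonneg (by linarith) g2)
    have := (mul_nonneg_iff_of_pos_left h2ab).mp hsumn
    linarith
  · have e1 : 0 ≤ (P * a - Q * b) * (a - b) - C₀ * (F * (a - b) ^ 2) := by
      nlinarith [mul_le_mul_of_nonneg_right hV1 habn]
    have e2 : 0 ≤ (P * a + Q * b) * (a + b) - C₀ * (F * (a + b) ^ 2) := by
      nlinarith [mul_le_mul_of_nonneg_right hV2 (by linarith : (0:ℝ) ≤ a + b)]
    have hsumn : 0 ≤ 2 * (a * b) *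
        ((P * a ^ 2 + Q * b ^ 2 - (P + Q) * t) - C₀ * (F * (a ^ 2 + b ^ 2 - 2 * t))) := by
      have iden : 2 * (a * b) *
          ((P * a ^ 2 + Q * b ^ 2 - (P + Q) * t) - C₀ * (F * (a ^ 2 + b ^ 2 - 2 * t)))
          = (a * b + t) * ((P * a - Q * b) * (a - b) - C₀ * (F * (a - b) ^ 2))
            + (a * b - t) * ((P * a + Q * b) * (a + b) - C₀ * (F * (a + b) ^ 2)) := by
        ring
      rw [iden]
      exact add_nonneg (mul_nonneg (by linarith) e1) (mul_nonneg (by linarith) e2)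
    have := (mul_nonneg_iff_of_pos_left h2ab).mp hsumn
    linarith
end Core

section Vector
variable {E : Type*} [NormedAddCommGroup E] [InnerProductSpace ℝ E]
variable {φ' φ'' : ℝ → ℝ} {d d' : ℝ}

lemma main_case (hd : 0 < d) (hd' : 0 < d') (hzero : φ' 0 = 0)
    (hpos : ∀ t : ℝ, 0 < t → 0 < φ' t)
    (hmono : MonotoneOn φ' (Set.Ici 0)) (hcont : ContinuousOn φ' (Set.Ici 0))
    (hderiv : ∀ t : ℝ, 0 < t → HasDerivAt φ' (φ'' t) t)
    (hlb : ∀ t : ℝ, 0 < t → d * (t * φ'' t) ≤ φ' t)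
    (hub : ∀ t : ℝ, 0 < t → φ' t ≤ d' * (t * φ'' t))
    (A : E → E) (hA0 : A 0 = 0) (hAz : ∀ z, z ≠ 0 → A z = (φ' ‖z‖ / ‖z‖) • z)
    (z₁ z₂ : E) (hba : ‖z₂‖ ≤ ‖z₁‖) (ha : 0 < ‖z₁‖) :
    ‖A z₁ - A z₂‖ ≤ (4 * d' + 4 * d' / d) * (φ'' (‖z₁‖ + ‖z₂‖) * ‖z₁ - z₂‖) ∧
    (d / (2 * d' * 4 ^ (1/d:ℝ) + 4 ^ (1/d:ℝ) + 1)) * (φ'' (‖z₁‖ + ‖z₂‖) * ‖z₁ - z₂‖ ^ 2) ≤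
      ⟪A z₁ - A z₂, z₁ - z₂⟫ := by
  have hK : 0 < (4:ℝ) ^ (1/d:ℝ) := Real.rpow_pos_of_pos (by norm_num) _
  have hc₀ : 0 < 4 * d' + 4 * d' / d := by positivity
  have hC₀ : 0 < d / (2 * d' * 4 ^ (1/d:ℝ) + 4 ^ (1/d:ℝ) + 1) := by positivity
  have hz1 : z₁ ≠ 0 := by
    intro h; rw [h, norm_zero] at ha; exact lt_irrefl _ ha
  by_cases hz2 : z₂ = 0
  · -- z₂ = 0
    subst hz2
    rw [hA0, hAz z₁ hz1]
    simp only [norm_zero, sub_zero, add_zero]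
    have hφ''a : 0 < φ'' ‖z₁‖ := phi''pos hd' hpos hub ha
    have hφa : 0 ≤ φ' ‖z₁‖ := phi'nonneg hzero hpos ha.le
    have hna : ‖(φ' ‖z₁‖ / ‖z₁‖) • z₁‖ = φ' ‖z₁‖ := by
      rw [norm_smul, Real.norm_eq_abs, abs_of_nonneg (div_nonneg hφa ha.le),
        div_mul_cancel₀ _ (ne_of_gt ha)]
    have hia : ⟪(φ' ‖z₁‖ / ‖z₁‖) • z₁, z₁⟫ = φ' ‖z₁‖ * ‖z₁‖ := by
      rw [real_inner_smul_left, real_inner_self_eq_norm_sq]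
      field_simp
    constructor
    · rw [hna]
      have h1 := hub ‖z₁‖ ha
      have hc₀d' : d' ≤ 4 * d' + 4 * d' / d := by
        have h4d : 0 < 4 * d' / d := by positivity
        linarith
      nlinarith [mul_nonneg hφ''a.le ha.le]
    · rw [hia]
      have h1 := hlb ‖z₁‖ ha
      have hC₀d : d / (2 * d' * 4 ^ (1/d:ℝ) + 4 ^ (1/d:ℝ) + 1) ≤ d := by
        calc d / (2 * d' * 4 ^ (1/d:ℝ) + 4 ^ (1/d:ℝ) + 1) ≤ d / 1 :=
          div_le_div_of_nonneg_left hd.le one_pos (by nlinarith [mul_pos hd' hK])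
        _ = d := div_one d
      nlinarith [mul_nonneg (mul_nonneg hφ''a.le ha.le) ha.le,
        mul_nonneg (sub_nonneg.2 hC₀d) (mul_nonneg hφ''a.le (mul_nonneg ha.le ha.le))]
  · -- both nonzero
    have hb : 0 < ‖z₂‖ := norm_pos_iff.2 hz2
    have hab : 0 < ‖z₁‖ + ‖z₂‖ := by linarith
    have hφ'' : 0 < φ'' (‖z₁‖ + ‖z₂‖) := phi''pos hd' hpos hub hab
    have hPa : φ' ‖z₁‖ / ‖z₁‖ * ‖z₁‖ = φ' ‖z₁‖ := div_mul_cancel₀ _ (ne_of_gt ha)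
    have hQb : φ' ‖z₂‖ / ‖z₂‖ * ‖z₂‖ = φ' ‖z₂‖ := div_mul_cancel₀ _ (ne_of_gt hb)
    obtain ⟨ht2, ht1⟩ := abs_le.1 (abs_real_inner_le_norm z₁ z₂)
    have hdiff : 0 ≤ φ' ‖z₁‖ - φ' ‖z₂‖ := sub_nonneg.2 <|
      hmono (Set.mem_Ici.2 hb.le) (Set.mem_Ici.2 ha.le) hba
    -- scalar estimates with uniform constants
    have hU1' : φ' ‖z₁‖ - φ' ‖z₂‖ ≤
        (4 * d' + 4 * d' / d) * (φ'' (‖z₁‖ + ‖z₂‖) * (‖z₁‖ - ‖z₂‖)) :=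
      L1 hd hd' hzero hpos hmono hcont hderiv hlb hub hb.le hba ha
    have hU2' : φ' ‖z₁‖ + φ' ‖z₂‖ ≤
        (4 * d' + 4 * d' / d) * (φ'' (‖z₁‖ + ‖z₂‖) * (‖z₁‖ + ‖z₂‖)) := by
      have h1 := L2 hd' hpos hmono hub hb.le hba ha
      have hextra : 0 ≤ (4 * d' / d + 2 * d') * (φ'' (‖z₁‖ + ‖z₂‖) * (‖z₁‖ + ‖z₂‖)) := by
        apply mul_nonneg (by positivity) (mul_nonneg hφ''.le hab.le)
      nlinarith
    have hV1' : (d / (2 * d' * 4 ^ (1/d:ℝ) + 4 ^ (1/d:ℝ) + 1)) *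
        (φ'' (‖z₁‖ + ‖z₂‖) * (‖z₁‖ - ‖z₂‖)) ≤ φ' ‖z₁‖ - φ' ‖z₂‖ := by
      have h1 := L3 hd hd' hzero hpos hmono hcont hderiv hlb hub hb.le hba ha
      have hle : d / (2 * d' * 4 ^ (1/d:ℝ) + 4 ^ (1/d:ℝ) + 1) ≤ d / (2 * d' * 4 ^ (1/d:ℝ)) :=
        div_le_div_of_nonneg_left hd.le (by positivity) (by nlinarith)
      calc _ ≤ (d / (2 * d' * 4 ^ (1/d:ℝ))) * (φ'' (‖z₁‖ + ‖z₂‖) * (‖z₁‖ - ‖z₂‖)) :=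
            mul_le_mul_of_nonneg_right hle (mul_nonneg hφ''.le (by linarith))
        _ ≤ _ := h1
    have hV2' : (d / (2 * d' * 4 ^ (1/d:ℝ) + 4 ^ (1/d:ℝ) + 1)) *
        (φ'' (‖z₁‖ + ‖z₂‖) * (‖z₁‖ + ‖z₂‖)) ≤ φ' ‖z₁‖ + φ' ‖z₂‖ := by
      have h1 := L4 hd hd' hzero hpos hderiv hlb hb.le hba ha
      have hle : d / (2 * d' * 4 ^ (1/d:ℝ) + 4 ^ (1/d:ℝ) + 1) ≤ d / 4 ^ (1/d:ℝ) :=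
        div_le_div_of_nonneg_left hd.le hK (by nlinarith [mul_pos hd' hK])
      calc _ ≤ (d / 4 ^ (1/d:ℝ)) * (φ'' (‖z₁‖ + ‖z₂‖) * (‖z₁‖ + ‖z₂‖)) :=
            mul_le_mul_of_nonneg_right hle (mul_nonneg hφ''.le hab.le)
        _ ≤ _ := h1
    have hsum0 : 0 ≤ φ' ‖z₁‖ + φ' ‖z₂‖ := by
      have := phi'nonneg hzero hpos ha.le
      have := phi'nonneg hzero hpos hb.le
      linarith
    obtain ⟨core1, core2⟩ := core ha hb hba hφ''.le hPa hQb ht1 ht2 hc₀.le hdiff hsum0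
      hU1' hU2' hV1' hV2'
    have hnorm2 : ‖z₁ - z₂‖ ^ 2 = ‖z₁‖ ^ 2 + ‖z₂‖ ^ 2 - 2 * ⟪z₁, z₂⟫ := by
      rw [norm_sub_sq_real]; ring
    rw [hAz z₁ hz1, hAz z₂ hz2]
    constructor
    · -- Lipschitz
      have hnormA : ‖(φ' ‖z₁‖ / ‖z₁‖) • z₁ - (φ' ‖z₂‖ / ‖z₂‖) • z₂‖ ^ 2
          = (φ' ‖z₁‖ / ‖z₁‖) ^ 2 * ‖z₁‖ ^ 2 + (φ' ‖z₂‖ / ‖z₂‖) ^ 2 * ‖z₂‖ ^ 2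
            - 2 * ((φ' ‖z₁‖ / ‖z₁‖) * (φ' ‖z₂‖ / ‖z₂‖)) * ⟪z₁, z₂⟫ := by
        rw [norm_sub_sq_real, norm_smul, norm_smul, real_inner_smul_left, real_inner_smul_right,
          mul_pow, mul_pow, Real.norm_eq_abs, Real.norm_eq_abs, sq_abs, sq_abs]
        ring
      have hsq : ‖(φ' ‖z₁‖ / ‖z₁‖) • z₁ - (φ' ‖z₂‖ / ‖z₂‖) • z₂‖ ^ 2
          ≤ ((4 * d' + 4 * d' / d) * (φ'' (‖z₁‖ + ‖z₂‖) * ‖z₁ - z₂‖)) ^ 2 := by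
        rw [hnormA]
        calc _ ≤ ((4 * d' + 4 * d' / d) * φ'' (‖z₁‖ + ‖z₂‖)) ^ 2
              * (‖z₁‖ ^ 2 + ‖z₂‖ ^ 2 - 2 * ⟪z₁, z₂⟫) := core1
          _ = ((4 * d' + 4 * d' / d) * (φ'' (‖z₁‖ + ‖z₂‖) * ‖z₁ - z₂‖)) ^ 2 := by
              rw [← hnorm2]; ring
      exact (pow_le_pow_iff_left₀ (norm_nonneg _)
        (mul_nonneg hc₀.le (mul_nonneg hφ''.le (norm_nonneg _))) two_ne_zero).mp hsq
    · -- monotonicity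
      have hinner : ⟪(φ' ‖z₁‖ / ‖z₁‖) • z₁ - (φ' ‖z₂‖ / ‖z₂‖) • z₂, z₁ - z₂⟫
          = (φ' ‖z₁‖ / ‖z₁‖) * ‖z₁‖ ^ 2 + (φ' ‖z₂‖ / ‖z₂‖) * ‖z₂‖ ^ 2
            - ((φ' ‖z₁‖ / ‖z₁‖) + (φ' ‖z₂‖ / ‖z₂‖)) * ⟪z₁, z₂⟫ := by
        rw [inner_sub_left, inner_sub_right, inner_sub_right, real_inner_smul_left,
          real_inner_smul_left, real_inner_smul_left, real_inner_smul_left,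
          real_inner_self_eq_norm_sq, real_inner_self_eq_norm_sq, real_inner_comm z₂ z₁]
        ring
      rw [hinner, hnorm2]
      linarith [core2]
end Vector

/-- Under the Assumption, with `A(z) = φ'(|z|)·z/|z|`, `A(0) = 0`:
Lipschitz-type and monotonicity estimates for `A`. -/
theorem A_estimates (φ φ' φ'' : ℝ → ℝ) (hA : SatisfiesAssumption φ φ' φ'')
    (d d' : ℝ) (hd : 0 < d) (hd' : 0 < d')
    (hequiv : ∀ t : ℝ, 0 < t → d * (t * φ'' t) ≤ φ' t ∧ φ' t ≤ d' * (t * φ'' t))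
    (N n : ℕ) (A : EuclideanSpace ℝ (Fin (N * n)) → EuclideanSpace ℝ (Fin (N * n)))
    (hA0 : A 0 = 0) (hAz : ∀ z, z ≠ 0 → A z = (φ' ‖z‖ / ‖z‖) • z) :
    ∃ c C : ℝ, 0 < c ∧ 0 < C ∧
      ∀ z₁ z₂ : EuclideanSpace ℝ (Fin (N * n)), 0 < ‖z₁‖ + ‖z₂‖ →
        ‖A z₁ - A z₂‖ ≤ c * (φ'' (‖z₁‖ + ‖z₂‖) * ‖z₁ - z₂‖) ∧
        C * (φ'' (‖z₁‖ + ‖z₂‖) * ‖z₁ - z₂‖ ^ 2) ≤ @inner ℝ _ _ (A z₁ - A z₂) (z₁ - z₂) := by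
  obtain ⟨⟨_, _, hzero, _, _, hmono, hpos, _⟩, _, hcont, hderiv, _⟩ := hA
  have hlb : ∀ t : ℝ, 0 < t → d * (t * φ'' t) ≤ φ' t := fun t ht => (hequiv t ht).1
  have hub : ∀ t : ℝ, 0 < t → φ' t ≤ d' * (t * φ'' t) := fun t ht => (hequiv t ht).2
  refine ⟨4 * d' + 4 * d' / d, d / (2 * d' * 4 ^ (1/d:ℝ) + 4 ^ (1/d:ℝ) + 1),
    by positivity, by positivity, ?_⟩
  intro z₁ z₂ hz
  rcases le_total ‖z₂‖ ‖z₁‖ with h | h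
  · exact main_case hd hd' hzero hpos hmono hcont hderiv hlb hub A hA0 hAz z₁ z₂ h
      (by linarith)
  · obtain ⟨h1, h2⟩ := main_case hd hd' hzero hpos hmono hcont hderiv hlb hub A hA0 hAz
      z₂ z₁ h (by linarith)
    constructor
    · rw [norm_sub_rev (A z₁) (A z₂), norm_sub_rev z₁ z₂, add_comm ‖z₁‖ ‖z₂‖]
      exact h1
    · have hflip : (inner ℝ (A z₁ - A z₂) (z₁ - z₂) : ℝ) = inner ℝ (A z₂ - A z₁) (z₂ - z₁) := by
        rw [show A z₁ - A z₂ = -(A z₂ - A z₁) from (neg_sub _ _).symm,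
          show z₁ - z₂ = -(z₂ - z₁) from (neg_sub _ _).symm, inner_neg_neg]
      rw [hflip, norm_sub_rev z₁ z₂, add_comm ‖z₁‖ ‖z₂‖]
      exact h2
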